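/- Let h(x,y,z) = x ∧ (y ∨ z) be the ternary boolean operation, and let S ⊆ {0,1}^n be such that for every i ∈ [n] there exist u, w ∈ S with u_i = 1 and w_i = 0. Then a vector v ∈ {0,1}^n belongs to Cl_{h}(S) if and only if (i) there exists w ∈ S with 𝟙(v) ⊆ 𝟙(w), and (ii) for every pair (k, i) ∈ 𝟙(v) × 𝟘(v) there exists w ∈ S with (w_k, w_i) = (1,0). -/

import Mathlib

/-- A finitary operation on `D`: an arity `t` together with a function `D^t → D`. -/
abbrev Op (D : Type*) := Σ t : ℕ, (Fin t → D) → D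

/-- The closure of a set `S` of vectors under the coordinatewise application of the
operations in `F`. -/
inductive Cl {D ι : Type*} (F : Set (Op D)) (S : Set (ι → D)) : (ι → D) → Prop
  | base {v : ι → D} : v ∈ S → Cl F S v
  | app {t : ℕ} {f : (Fin t → D) → D} (hf : (⟨t, f⟩ : Op D) ∈ F)
      (vs : Fin t → ι → D) (hvs : ∀ j, Cl F S (vs j)) :
      Cl F S (fun i => f fun j => vs j i)

private lemma hApp {n : ℕ} {S : Set (Fin n → Bool)} {a b c : Fin n → Bool}
    (ha : Cl {(⟨3, fun x => x 0 && (x 1 || x 2)⟩ : Op Bool)} S a)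
    (hb : Cl {(⟨3, fun x => x 0 && (x 1 || x 2)⟩ : Op Bool)} S b)
    (hc : Cl {(⟨3, fun x => x 0 && (x 1 || x 2)⟩ : Op Bool)} S c) :
    Cl {(⟨3, fun x => x 0 && (x 1 || x 2)⟩ : Op Bool)} S
      (fun i => a i && (b i || c i)) := by
  have h := Cl.app (F := {(⟨3, fun x => x 0 && (x 1 || x 2)⟩ : Op Bool)}) (S := S)
    (Set.mem_singleton _) (![a, b, c]) (by
      intro j
      fin_cases j <;> simpa)
  convert h using 1
  rfl

/-- Characterization of the closure of `S ⊆ {0,1}^n` under `h(x,y,z) = x ∧ (y ∨ z)`,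
when every coordinate takes both values on `S`: `v ∈ Cl_h(S)` iff (i) some `w ∈ S`
satisfies `𝟙(v) ⊆ 𝟙(w)`, and (ii) for every `(k,i) ∈ 𝟙(v) × 𝟘(v)` some `w ∈ S` has
`(w_k, w_i) = (1,0)`. -/
theorem closure_and_or_ternary_iff {n : ℕ} (S : Set (Fin n → Bool))
    (hS : ∀ i : Fin n, (∃ u ∈ S, u i = true) ∧ (∃ w ∈ S, w i = false))
    (v : Fin n → Bool) :
    Cl {(⟨3, fun x => x 0 && (x 1 || x 2)⟩ : Op Bool)} S v ↔
      ((∃ w ∈ S, ∀ i, v i = true → w i = true) ∧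
        ∀ k i : Fin n, v k = true → v i = false →
          ∃ w ∈ S, w k = true ∧ w i = false) := by
  constructor
  · intro hcl
    induction hcl with
    | base h =>
      exact ⟨⟨_, h, fun _ hi => hi⟩, fun k i hk hi => ⟨_, h, hk, hi⟩⟩
    | app hf vs hvs ih =>
      rw [Set.mem_singleton_iff] at hf
      obtain ⟨ht, hfe⟩ := Sigma.mk.inj_iff.mp hf
      subst ht
      have hfe' := eq_of_heq hfe
      subst hfe'
      constructor
      · obtain ⟨w, hwS, hw⟩ := (ih 0).1
        refine ⟨w, hwS, fun i hi => hw i ?_⟩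
        simpa using (Bool.and_eq_true _ _ |>.mp hi).1
      · intro k i hk hi
        simp only [Bool.and_eq_true, Bool.or_eq_true] at hk
        rcases Bool.and_eq_false_iff.mp hi with h0 | h12
        · exact (ih 0).2 k i hk.1 h0
        · rcases Bool.or_eq_false_iff.mp h12 with ⟨h1, h2⟩
          rcases hk.2 with hk1 | hk2
          · exact (ih 1).2 k i hk1 h1
          · exact (ih 2).2 k i hk2 h2
  · rintro ⟨⟨w0, hw0S, hw0⟩, hpair⟩
    -- Step 1: for each zero coordinate i, build u with u i = false and u = true on any
    -- finite set of one-coordinates of v.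
    have key1 : ∀ i : Fin n, v i = false → ∀ K : Finset (Fin n),
        (∀ k ∈ K, v k = true) →
        ∃ u, Cl {(⟨3, fun x => x 0 && (x 1 || x 2)⟩ : Op Bool)} S u ∧
          u i = false ∧ ∀ k ∈ K, u k = true := by
      intro i hi K
      induction K using Finset.induction_on with
      | empty =>
        intro _
        obtain ⟨w, hwS, hwi⟩ := (hS i).2
        exact ⟨w, Cl.base hwS, hwi, by simp⟩
      | @insert k K hkK ihK =>
        intro hK
        obtain ⟨u, hu, hui, huK⟩ := ihK (fun k' hk' => hK k' (Finset.mem_insert_of_mem hk'))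
        obtain ⟨w, hwS, hwk, hwi⟩ := hpair k i (hK k (Finset.mem_insert_self k K)) hi
        refine ⟨fun j => w0 j && (u j || w j), hApp (Cl.base hw0S) hu (Cl.base hwS), ?_, ?_⟩
        · simp [hui, hwi]
        · intro k' hk'
          rcases Finset.mem_insert.mp hk' with rfl | hk'
          · simp [hw0 k' (hK k' (Finset.mem_insert_self k' K)), hwk]
          · simp [hw0 k' (hK k' (Finset.mem_insert_of_mem hk')), huK k' hk']
    -- Step 2: meet over a finite set of zero coordinates.
    have key2 : ∀ I : Finset (Fin n), (∀ i ∈ I, v i = false) →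
        ∃ u, Cl {(⟨3, fun x => x 0 && (x 1 || x 2)⟩ : Op Bool)} S u ∧
          (∀ j, v j = true → u j = true) ∧ ∀ i ∈ I, u i = false := by
      intro I
      induction I using Finset.induction_on with
      | empty =>
        intro _
        exact ⟨w0, Cl.base hw0S, hw0, by simp⟩
      | @insert i I hiI ihI =>
        intro hI
        obtain ⟨u, hu, hu1, hu0⟩ := ihI (fun i' hi' => hI i' (Finset.mem_insert_of_mem hi'))
        obtain ⟨u', hu', hui', huK'⟩ := key1 i (hI i (Finset.mem_insert_self i I))
          (Finset.univ.filter (fun k => v k = true))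
          (fun k hk => (Finset.mem_filter.mp hk).2)
        refine ⟨fun j => u j && (u' j || u' j), hApp hu hu' hu', ?_, ?_⟩
        · intro j hj
          have : u' j = true := huK' j (Finset.mem_filter.mpr ⟨Finset.mem_univ j, hj⟩)
          simp [hu1 j hj, this]
        · intro i' hi'
          rcases Finset.mem_insert.mp hi' with rfl | hi'
          · simp [hui']
          · simp [hu0 i' hi']
    obtain ⟨u, hu, hu1, hu0⟩ := key2 (Finset.univ.filter (fun i => v i = false))
      (fun i hi => (Finset.mem_filter.mp hi).2)
    have hv : v = u := by
      funext j
      cases hvj : v j with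
      | false => exact (hu0 j (Finset.mem_filter.mpr ⟨Finset.mem_univ j, hvj⟩)).symm
      | true => exact (hu1 j hvj).symm
    exact hv ▸ hu
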